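/- arXiv:math/0504359 — 3 statements merged into one kernel-verified Lean document; each statement's English description precedes it below -/
import Mathlib

section
/- Let F be a field, α ∈ F nonzero, and n a positive integer. If α is not a q-th power in F for every prime divisor q of n, then either the polynomial X^n − α is irreducible over F, or 4 divides n and α ∈ −4F^4 (i.e., α = −4β^4 for some β ∈ F). -/
open Polynomial IntermediateField

-- Key quadratic lemma: if `a` is not a square and not in `-4K⁴`, and `x` has minimal
-- polynomial `X² - a`, then `√a` is not a square in `K(√a)` and not in `-4·K(√a)⁴`.
theorem quad_key {K : Type*} [Field K] {L : Type*} [Field L] [Algebra K L]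
    (a : K) (ha : a ≠ 0) (ha2 : ∀ b : K, b ^ 2 ≠ a)
    (ha4 : ∀ b : K, a ≠ -4 * b ^ 4) (x : L) (hx : minpoly K x = X ^ 2 - C a) :
    (∀ β : K⟮x⟯, β ^ 2 ≠ AdjoinSimple.gen K x) ∧
    (∀ β : K⟮x⟯, AdjoinSimple.gen K x ≠ -4 * β ^ 4) := by
  have hint : IsIntegral K x := not_not.mp fun h ↦ by
    simpa only [degree_zero, degree_X_pow_sub_C (by norm_num : 0 < 2),
      WithBot.natCast_ne_bot] using congr_arg degree (hx.symm.trans (dif_neg h))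
  set g := AdjoinSimple.gen K x with hgdef
  have hming : minpoly K g = X ^ 2 - C a := by rw [minpoly_gen, hx]
  have hg2 : g ^ 2 = algebraMap K K⟮x⟯ a := by
    have := minpoly.aeval K g
    rw [hming] at this
    simpa [sub_eq_zero] using this
  -- uniqueness of coordinates
  have hzero : ∀ c d : K, algebraMap K K⟮x⟯ c + algebraMap K K⟮x⟯ d * g = 0 →
      c = 0 ∧ d = 0 := by
    intro c d hcd
    have haev : aeval g (C c + C d * X) = 0 := by simpa using hcd
    have hdvd : minpoly K g ∣ C c + C d * X := minpoly.dvd K g haev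
    have hz : (C c + C d * X : K[X]) = 0 := by
      refine Polynomial.eq_zero_of_dvd_of_degree_lt hdvd ?_
      rw [hming, degree_X_pow_sub_C (by norm_num : 0 < 2)]
      calc degree (C c + C d * X) ≤ max (degree (C c)) (degree (C d * X)) :=
            degree_add_le _ _
        _ ≤ 1 := max_le (degree_C_le.trans (by norm_num)) (degree_C_mul_X_le d)
        _ < 2 := by norm_num
    constructor
    · have := congr_arg (fun p => Polynomial.coeff p 0) hz; simpa using this
    · have := congr_arg (fun p => Polynomial.coeff p 1) hz; simpa using this
  -- existence of coordinates
  have hrepr : ∀ β : K⟮x⟯, ∃ c d : K,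
      β = algebraMap K K⟮x⟯ c + algebraMap K K⟮x⟯ d * g := by
    intro β
    obtain ⟨f, hfdeg, hf⟩ := (adjoin.powerBasis hint).exists_eq_aeval β
    have hdim : (adjoin.powerBasis hint).dim = 2 := by
      simp [adjoin.powerBasis, hx]
    rw [hdim] at hfdeg
    have hfd1 : degree f ≤ 1 := by
      rcases eq_or_ne f 0 with rfl | hf0
      · simp
      · rw [degree_eq_natDegree hf0]
        exact_mod_cast Nat.lt_succ_iff.mp hfdeg
    refine ⟨f.coeff 0, f.coeff 1, ?_⟩
    rw [hf, adjoin.powerBasis_gen]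
    conv_lhs => rw [Polynomial.eq_X_add_C_of_degree_le_one hfd1]
    simp only [map_add, map_mul, aeval_C, aeval_X]
    ring
  -- the main computation
  have hmain : ∀ (c d e : K), e = 1 ∨ e = -1 →
      (algebraMap K K⟮x⟯ c + algebraMap K K⟮x⟯ d * g) ^ 2 = algebraMap K K⟮x⟯ e * g →
      False := by
    intro c d e he hsq
    have hexp0 : algebraMap K K⟮x⟯ (c ^ 2 + d ^ 2 * a) + algebraMap K K⟮x⟯ (2 * c * d - e) * g
        = (algebraMap K K⟮x⟯ c + algebraMap K K⟮x⟯ d * g) ^ 2 - algebraMap K K⟮x⟯ e * g := by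
      simp only [map_add, map_sub, map_mul, map_pow, map_ofNat]
      rw [← hg2]; ring
    have hexp : algebraMap K K⟮x⟯ (c ^ 2 + d ^ 2 * a)
        + algebraMap K K⟮x⟯ (2 * c * d - e) * g = 0 := by
      rw [hexp0, hsq, sub_self]
    obtain ⟨h1, h2⟩ := hzero _ _ hexp
    have he2 : e ^ 2 = 1 := by rcases he with rfl | rfl <;> norm_num
    have h2' : 2 * c * d = e := by linear_combination h2
    have key : (4 : K) * c ^ 4 + e ^ 2 * a = 0 := by
      have h3 : (4 : K) * c ^ 4 + e ^ 2 * a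
          = (2 * c) ^ 2 * (c ^ 2 + d ^ 2 * a) - ((2 * c * d) ^ 2 - e ^ 2) * a := by ring
      rw [h1, h2', sub_self, mul_zero, zero_mul, sub_zero] at h3
      exact h3
    rw [he2, one_mul] at key
    exact ha4 c (by linear_combination key)
  constructor
  · intro β hβ
    obtain ⟨c, d, rfl⟩ := hrepr β
    exact hmain c d 1 (Or.inl rfl) (by rw [hβ, map_one, one_mul])
  · intro β hβ
    have hv : (2 * β ^ 2) ^ 2 = algebraMap K K⟮x⟯ (-1) * g := by
      rw [map_neg, map_one, neg_one_mul, hβ]; ring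
    obtain ⟨c, d, hcd⟩ := hrepr (2 * β ^ 2)
    rw [hcd] at hv
    exact hmain c d (-1) (Or.inr rfl) hv

-- The full Vahlen–Capelli criterion (sufficiency direction).
theorem vahlen_capelli : ∀ (n : ℕ) {K : Type*} [Field K] (a : K), a ≠ 0 → n ≠ 0 →
    (∀ q : ℕ, q.Prime → q ∣ n → ∀ b : K, b ^ q ≠ a) →
    (4 ∣ n → ∀ b : K, a ≠ -4 * b ^ 4) →
    Irreducible ((X : K[X]) ^ n - C a) := by
  intro n
  induction n using induction_on_primes with
  | zero => intro K _ a _ hn _ _; exact absurd rfl hn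
  | one => intro K _ a _ _ _ _; simpa using irreducible_X_sub_C a
  | prime_mul p m hp IH =>
    intro K _ a ha hn h1 h2
    have hm : m ≠ 0 := right_ne_zero_of_mul hn
    rw [mul_comm]
    apply X_pow_mul_sub_C_irreducible
      (X_pow_sub_C_irreducible_of_prime hp (h1 p hp (dvd_mul_right p m)))
    intro E _ _ x hx
    have hint : IsIntegral K x := not_not.mp fun h ↦ by
      simpa only [degree_zero, degree_X_pow_sub_C hp.pos,
        WithBot.natCast_ne_bot] using congr_arg degree (hx.symm.trans (dif_neg h))
    have hming : minpoly K (AdjoinSimple.gen K x) = X ^ p - C a := by rw [minpoly_gen, hx]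
    have hgp : (AdjoinSimple.gen K x) ^ p = algebraMap K K⟮x⟯ a := by
      have := minpoly.aeval K (AdjoinSimple.gen K x)
      rw [hming] at this
      simpa [sub_eq_zero] using this
    have hg0 : (AdjoinSimple.gen K x) ≠ 0 := by
      intro h
      apply ha
      have : algebraMap K K⟮x⟯ a = 0 := by rw [← hgp, h, zero_pow hp.ne_zero]
      exact (_root_.map_eq_zero _).mp this
    have hnorm : Algebra.norm K (AdjoinSimple.gen K x) = (-1) ^ p * (-a) := by
      rw [← adjoin.powerBasis_gen hint, Algebra.PowerBasis.norm_gen_eq_coeff_zero_minpoly]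
      rw [adjoin.powerBasis_gen, hming]
      simp [adjoin.powerBasis, hx, coeff_X_pow, hp.ne_zero.symm, natDegree_X_pow_sub_C]
    apply IH
    · exact hg0
    · exact hm
    · -- no q-th powers
      intro q hq hqm b hb
      by_cases hpq : p = 2 ∧ q = 2
      · obtain ⟨hp2, hq2⟩ := hpq
        subst hp2; subst hq2
        have ha2 : ∀ b : K, b ^ 2 ≠ a := h1 2 Nat.prime_two (dvd_mul_right 2 m)
        have ha4 : ∀ b : K, a ≠ -4 * b ^ 4 := h2 (by omega)
        exact (quad_key a ha ha2 ha4 x hx).1 b hb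
      · have hNb : (Algebra.norm K b) ^ q = (-1) ^ p * (-a) := by
          rw [← map_pow, hb, hnorm]
        rcases hp.eq_two_or_odd' with hp2 | hpodd
        · -- p = 2, q odd
          have hq2 : q ≠ 2 := fun h => hpq ⟨hp2, h⟩
          have hqodd : Odd q := hq.odd_of_ne_two hq2
          subst hp2
          have : (-(Algebra.norm K b)) ^ q = a := by
            rw [hqodd.neg_pow, hNb]; ring
          exact h1 q hq (hqm.mul_left 2) _ this
        · -- p odd
          have : (Algebra.norm K b) ^ q = a := by
            rw [hNb, hpodd.neg_one_pow]; ring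
          exact h1 q hq (hqm.mul_left p) _ this
    · -- the -4 condition
      intro h4m β hβ
      have h4n : 4 ∣ p * m := h4m.mul_left p
      rcases hp.eq_two_or_odd' with hp2 | hpodd
      · subst hp2
        have ha2 : ∀ b : K, b ^ 2 ≠ a := h1 2 Nat.prime_two (dvd_mul_right 2 m)
        have ha4 : ∀ b : K, a ≠ -4 * b ^ 4 := h2 h4n
        exact (quad_key a ha ha2 ha4 x hx).2 β hβ
      · -- p odd: take norms
        have hfr : Module.finrank K K⟮x⟯ = p := by
          rw [adjoin.finrank hint, hx, natDegree_X_pow_sub_C]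
        have hNg : Algebra.norm K (AdjoinSimple.gen K x) = a := by
          rw [hnorm, hpodd.neg_one_pow]; ring
        have hneg4 : (-4 : K⟮x⟯) = algebraMap K K⟮x⟯ (-4) := by
          rw [map_neg, map_ofNat]
        have hNa : a = (-4 : K) ^ p * (Algebra.norm K β) ^ 4 := by
          have := congr_arg (Algebra.norm K) hβ
          rw [hNg, hneg4, map_mul, map_pow, Algebra.norm_algebraMap, hfr] at this
          exact this
        obtain ⟨k, hk⟩ := hpodd
        refine h2 h4n (2 ^ k * Algebra.norm K β) ?_
        rw [hNa, hk]
        have e1 : (-4 : K) ^ (2 * k + 1) = -4 * (16 : K) ^ k := by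
          rw [pow_succ, pow_mul]; norm_num; ring
        have e2 : ((2 : K) ^ k * Algebra.norm K β) ^ 4
            = (16 : K) ^ k * (Algebra.norm K β) ^ 4 := by
          rw [mul_pow, ← pow_mul, mul_comm k 4, pow_mul]; norm_num
        rw [e1, e2]; ring

theorem stmt_0 {F : Type*} [Field F] (α : F) (hα : α ≠ 0) (n : ℕ) (hn : 1 ≤ n)
    (h : ∀ q : ℕ, q.Prime → q ∣ n → ¬∃ β : F, β ^ q = α) :
    Irreducible ((X : F[X]) ^ n - C α) ∨ (4 ∣ n ∧ ∃ β : F, α = -4 * β ^ 4) := by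
  by_cases hc : 4 ∣ n ∧ ∃ β : F, α = -4 * β ^ 4
  · exact Or.inr hc
  · left
    apply vahlen_capelli n α hα (by omega)
    · intro q hq hqn b hb
      exact h q hq hqn ⟨b, hb⟩
    · intro h4 b hb
      exact hc ⟨h4, b, hb⟩
end

section
/- Let L be a quadratic field with L ⊆ ℚ(ζ_d). Then the d-th cyclotomic polynomial Φ_d factors over L into a product of two monic irreducible polynomials, each of degree φ(d)/2. -/
set_option synthInstance.maxHeartbeats 1000000
set_option maxHeartbeats 1000000

open Polynomial
open IntermediateField

/-- If `L` is a quadratic field contained in the `d`-th cyclotomic field, then the `d`-th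
cyclotomic polynomial splits over `L` as a product of two monic irreducible polynomials,
each of degree `φ(d)/2`. -/
theorem stmt_9 (d : ℕ) (hd : 0 < d) (ζ : ℂ) (hζ : IsPrimitiveRoot ζ d)
    (L : IntermediateField ℚ ℂ) (hL : Module.finrank ℚ L = 2)
    (hsub : L ≤ IntermediateField.adjoin ℚ {ζ}) :
    ∃ f g : Polynomial L, f.Monic ∧ g.Monic ∧ Irreducible f ∧ Irreducible g ∧
      cyclotomic d L = f * g ∧
      f.natDegree = Nat.totient d / 2 ∧ g.natDegree = Nat.totient d / 2 := by
  haveI : NeZero d := ⟨hd.ne'⟩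
  have key : ∀ η : ℂ, IsPrimitiveRoot η d → 2 * (minpoly L η).natDegree = Nat.totient d := by
    intro η hη
    have hadj : IntermediateField.adjoin ℚ {η} = IntermediateField.adjoin ℚ {ζ} := by
      apply le_antisymm
      · obtain ⟨i, -, hi⟩ := hζ.eq_pow_of_pow_eq_one hη.pow_eq_one
        rw [adjoin_simple_le_iff, ← hi]
        exact pow_mem (mem_adjoin_simple_self ℚ ζ) i
      · obtain ⟨i, -, hi⟩ := hη.eq_pow_of_pow_eq_one hζ.pow_eq_one
        rw [adjoin_simple_le_iff, ← hi]
        exact pow_mem (mem_adjoin_simple_self ℚ η) i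
    have hζint : IsIntegral ℚ ζ := (hζ.isIntegral hd).tower_top
    have hηintL : IsIntegral L η := (hη.isIntegral hd).tower_top
    have hK : Module.finrank ℚ (IntermediateField.adjoin ℚ {ζ}) = Nat.totient d := by
      rw [adjoin.finrank hζint, ← cyclotomic_eq_minpoly_rat hζ hd, natDegree_cyclotomic]
    have hE : Module.finrank L (IntermediateField.adjoin L {η}) = (minpoly L η).natDegree :=
      adjoin.finrank hηintL
    have hres : (IntermediateField.adjoin L {η}).restrictScalars ℚ
        = IntermediateField.adjoin ℚ {ζ} := by
      refine (IntermediateField.restrictScalars_adjoin_eq_sup ℚ L ({η} : Set ℂ)).trans ?_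
      rw [hadj, sup_eq_right.mpr hsub]
    have htower := Module.finrank_mul_finrank ℚ L (IntermediateField.adjoin L {η})
    have hfr : Module.finrank ℚ (IntermediateField.adjoin L {η})
        = Module.finrank ℚ ((IntermediateField.adjoin L {η}).restrictScalars ℚ) := rfl
    rw [hL, hE] at htower
    rw [hfr, hres, hK] at htower
    exact htower
  have hζintL : IsIntegral L ζ := (hζ.isIntegral hd).tower_top
  set f := minpoly L ζ with hfdef
  have hfmono : f.Monic := minpoly.monic hζintL
  have hfirr : Irreducible f := minpoly.irreducible hζintL
  have hfdvd : f ∣ cyclotomic d L := by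
    apply minpoly.dvd
    rw [aeval_def, ← eval_map, map_cyclotomic]
    exact (isRoot_cyclotomic_iff).mpr hζ
  obtain ⟨g, hfg⟩ := hfdvd
  have hcyc : (cyclotomic d L).Monic := cyclotomic.monic d L
  have hgmono : g.Monic := by
    have := hcyc
    rw [hfg] at this
    exact hfmono.of_mul_monic_left this
  have hf2 : 2 * f.natDegree = Nat.totient d := key ζ hζ
  have hfpos : 0 < f.natDegree := minpoly.natDegree_pos hζintL
  have hdeg : f.natDegree + g.natDegree = Nat.totient d := by
    have := natDegree_cyclotomic d L
    rw [hfg, hfmono.natDegree_mul hgmono] at this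
    omega
  -- every monic irreducible factor of cyclotomic d L is a minpoly of a primitive root
  have hfactor : ∀ p : Polynomial L, p.Monic → Irreducible p → p ∣ cyclotomic d L →
      2 * p.natDegree = Nat.totient d := by
    intro p hpm hpi hpd
    have hpmap : p.map (algebraMap L ℂ) ∣ cyclotomic d ℂ := by
      rw [← map_cyclotomic d (algebraMap L ℂ)]
      exact Polynomial.map_dvd _ hpd
    have hdegpos : (p.map (algebraMap L ℂ)).degree ≠ 0 := by
      rw [degree_map]
      intro h
      have : p.natDegree = 0 := natDegree_eq_zero_iff_degree_le_zero.mpr h.le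
      exact hpi.not_isUnit (hpm.natDegree_eq_zero.mp this ▸ isUnit_one)
    obtain ⟨η, hηroot⟩ := Complex.isAlgClosed.exists_root _ hdegpos
    have hηprim : IsPrimitiveRoot η d := by
      rw [← isRoot_cyclotomic_iff (R := ℂ)]
      obtain ⟨q, hq⟩ := hpmap
      show eval η _ = 0
      rw [hq, eval_mul, hηroot.eq_zero, zero_mul]
    have haev : (aeval η) p = 0 := by
      rw [aeval_def, ← eval_map]; exact hηroot
    have : minpoly L η = p := (minpoly.eq_of_irreducible_of_monic hpi haev hpm).symm
    rw [← this]
    exact key η hηprim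
  refine ⟨f, g, hfmono, hgmono, hfirr, ?_, hfg, by omega, by omega⟩
  -- g irreducible
  have hgdeg : 2 * g.natDegree = Nat.totient d := by omega
  have hgpos : 0 < g.natDegree := by omega
  have hgne : g ≠ 0 := hgmono.ne_zero
  have hgnu : ¬ IsUnit g := by
    intro h
    rw [Polynomial.Monic.isUnit_iff hgmono] at h
    simp [h] at hgpos
  obtain ⟨r, hrirr, hrdvd⟩ := WfDvdMonoid.exists_irreducible_factor hgnu hgne
  classical
  set p := normalize r with hpdef
  have hpm : p.Monic := monic_normalize hrirr.ne_zero
  have hpi : Irreducible p := (associated_normalize r).irreducible hrirr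
  have hpdvd : p ∣ g := (normalize_dvd_iff).mpr hrdvd
  have hp2 : 2 * p.natDegree = Nat.totient d :=
    hfactor p hpm hpi (hpdvd.trans ⟨f, by rw [hfg, mul_comm]⟩)
  obtain ⟨q, hq⟩ := hpdvd
  have hqm : q.Monic := hpm.of_mul_monic_left (hq ▸ hgmono)
  have hqdeg : q.natDegree = 0 := by
    have := hgmono.natDegree_mul hqm  -- wrong; need natDegree of product
    have h2 : g.natDegree = p.natDegree + q.natDegree := by
      rw [hq, hpm.natDegree_mul hqm]
    omega
  have : q = 1 := hqm.natDegree_eq_zero.mp hqdeg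
  rw [hq, this, mul_one]
  exact hpi
end

section
/- Let G be a finite group, Λ a semisimple ring in which |G| is invertible, and t : G → Aut(Λ) a group homomorphism. Then the skew group ring Λ^t[G] is semisimple. -/
/-- `S` is a skew group ring of the finite group `G` over the ring `Λ` with respect to the
action `t : G →* RingAut Λ`. -/
structure IsSkewGroupRing (G : Type*) [Group G] [Fintype G]
    (Λ : Type*) [Ring Λ] (S : Type*) [Ring S]
    (t : G →* RingAut Λ) (ι : Λ →+* S) (j : G →* Sˣ) : Prop where
  comm : ∀ (τ : G) (a : Λ), (j τ : S) * ι a = ι (t τ a) * (j τ : S)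
  free : ∀ x : S, ∃! c : G → Λ, x = ∑ σ : G, (j σ : S) * ι (c σ)

/-- Maschke-type theorem: if `Λ` is semisimple and the order of the finite group `G` is
invertible in `Λ`, then the skew group ring `Λ^t[G]` is semisimple. -/
theorem stmt_18 {G Λ S : Type*} [Group G] [Fintype G] [Ring Λ] [Ring S]
    [IsSemisimpleRing Λ]
    (t : G →* RingAut Λ) (ι : Λ →+* S) (j : G →* Sˣ)
    (hS : IsSkewGroupRing G Λ S t ι j)
    (hcard : IsUnit ((Fintype.card G : Λ))) :
    IsSemisimpleRing S := by
  obtain ⟨comm, free⟩ := hS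
  letI : Module Λ S := Module.compHom S ι
  haveI : IsScalarTower Λ S S := ⟨fun a s m => mul_assoc (ι a) s m⟩
  -- the inverse of |G| in Λ
  set c : Λ := ((hcard.unit⁻¹ : Λˣ) : Λ) with hc_def
  have hc1 : (Fintype.card G : Λ) * c = 1 := by
    conv_lhs => rw [← hcard.unit_spec]
    exact hcard.unit.mul_inv
  have hccomm : ∀ a : Λ, a * c = c * a := by
    intro a
    have h1 : Commute a ((Fintype.card G : Λ)) := (Nat.cast_commute _ a).symm
    have h2 : Commute a ((hcard.unit : Λˣ) : Λ) := by rw [hcard.unit_spec]; exact h1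
    exact (h2.units_inv_right).eq
  have hct : ∀ σ : G, t σ c = c := by
    intro σ
    have h1 : t σ c * (Fintype.card G : Λ) = 1 := by
      have := map_mul (t σ) c (Fintype.card G : Λ)
      rw [← hccomm, hc1] at this
      simpa using this.symm
    calc t σ c = t σ c * ((Fintype.card G : Λ) * c) := by rw [hc1, mul_one]
      _ = (t σ c * (Fintype.card G : Λ)) * c := by rw [mul_assoc]
      _ = c := by rw [h1, one_mul]
  have hcj : ∀ τ : G, (j τ : S) * ι c = ι c * (j τ : S) := by
    intro τ; rw [comm, hct]
  refine (isSemisimpleModule_iff ..).mpr ⟨?_⟩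
  intro N
  -- Λ-linear projection onto N
  obtain ⟨N₁, hN₁⟩ := exists_isCompl (N.restrictScalars Λ)
  set π : S →ₗ[Λ] S :=
    (N.restrictScalars Λ).subtype ∘ₗ (N.restrictScalars Λ).linearProjOfIsCompl N₁ hN₁ with hπ_def
  have hπ_mem : ∀ x : S, π x ∈ N := fun x =>
    ((N.restrictScalars Λ).linearProjOfIsCompl N₁ hN₁ x).2
  have hπ_id : ∀ x ∈ N, π x = x := by
    intro x hx
    have := Submodule.linearProjOfIsCompl_apply_left hN₁ ⟨x, hx⟩
    exact congrArg ((N.restrictScalars Λ).subtype) this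
  have hπΛ : ∀ (a : Λ) (y : S), π (ι a * y) = ι a * π y := fun a y => π.map_smul a y
  -- the averaged projection
  set p : S → S := fun m => ∑ σ : G, (j σ : S) * (ι c * π ((j σ⁻¹ : Sˣ) * m)) with hp_def
  have hp_mem : ∀ m : S, p m ∈ N := by
    intro m
    refine N.sum_mem fun σ _ => ?_
    have h := N.smul_mem ((j σ : S) * ι c) (hπ_mem (((j σ⁻¹ : Sˣ) : S) * m))
    rwa [smul_eq_mul, mul_assoc] at h
  have hjj : ∀ σ : G, (j σ : S) * (j σ⁻¹ : Sˣ) = 1 := by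
    intro σ
    rw [← Units.val_mul, ← map_mul, mul_inv_cancel, map_one, Units.val_one]
  have hp_id : ∀ m ∈ N, p m = m := by
    intro m hm
    have h1 : ∀ σ : G, (j σ : S) * (ι c * π ((j σ⁻¹ : Sˣ) * m)) = ι c * m := by
      intro σ
      have h2 : π (((j σ⁻¹ : Sˣ) : S) * m) = ((j σ⁻¹ : Sˣ) : S) * m := by
        refine hπ_id _ ?_
        have h3 := N.smul_mem (((j σ⁻¹ : Sˣ) : S)) hm
        rwa [smul_eq_mul] at h3
      rw [h2]
      calc (j σ : S) * (ι c * (((j σ⁻¹ : Sˣ) : S) * m))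
          = (j σ : S) * (((j σ⁻¹ : Sˣ) : S) * (ι c * m)) := by
            rw [← mul_assoc (ι c), ← hcj σ⁻¹, mul_assoc]
        _ = ι c * m := by rw [← mul_assoc, hjj σ, one_mul]
      
    rw [hp_def]
    simp only [h1, Finset.sum_const, Finset.card_univ, nsmul_eq_mul]
    calc (Fintype.card G : S) * (ι c * m) = ι ((Fintype.card G : Λ) * c) * m := by
          rw [map_mul, map_natCast, mul_assoc]
      _ = m := by rw [hc1, map_one, one_mul]
  have hp_add : ∀ m m' : S, p (m + m') = p m + p m' := by
    intro m m'
    simp only [hp_def, mul_add, map_add, ← Finset.sum_add_distrib]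
  have hp_iota : ∀ (a : Λ) (m : S), p (ι a * m) = ι a * p m := by
    intro a m
    rw [hp_def]
    simp only [Finset.mul_sum]
    refine Finset.sum_congr rfl fun σ _ => ?_
    have h1 : ((j σ⁻¹ : Sˣ) : S) * (ι a * m) = ι (t σ⁻¹ a) * (((j σ⁻¹ : Sˣ) : S) * m) := by
      rw [← mul_assoc, comm, mul_assoc]
    have hb : t σ (t σ⁻¹ a) = a := by
      calc t σ (t σ⁻¹ a) = (t σ * t σ⁻¹) a := rfl
        _ = t (σ * σ⁻¹) a := by rw [← map_mul]
        _ = a := by rw [mul_inv_cancel, map_one]; rfl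
    rw [h1, hπΛ]
    calc (j σ : S) * (ι c * (ι (t σ⁻¹ a) * π (((j σ⁻¹ : Sˣ) : S) * m)))
        = (j σ : S) * (ι (c * t σ⁻¹ a) * π (((j σ⁻¹ : Sˣ) : S) * m)) := by
          rw [ι.map_mul, mul_assoc]
      _ = (j σ : S) * ι (t σ⁻¹ a) * (ι c * π (((j σ⁻¹ : Sˣ) : S) * m)) := by
          rw [← hccomm, ι.map_mul]; simp only [mul_assoc]
      _ = ι a * ((j σ : S) * (ι c * π (((j σ⁻¹ : Sˣ) : S) * m))) := by
          rw [comm σ, hb]; simp only [mul_assoc]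
  have hjj' : ∀ σ : G, ((j σ⁻¹ : Sˣ) : S) * (j σ : S) = 1 := by
    intro σ; have h := hjj σ⁻¹; rwa [inv_inv] at h
  have hp_j : ∀ (τ : G) (m : S), p ((j τ : S) * m) = (j τ : S) * p m := by
    intro τ m
    rw [hp_def]
    simp only [Finset.mul_sum]
    refine (Fintype.sum_equiv (Equiv.mulLeft τ) _ _ fun σ => ?_).symm
    simp only [Equiv.coe_mulLeft]
    have h1 : ((j (τ * σ)⁻¹ : Sˣ) : S) * ((j τ : S) * m) = ((j σ⁻¹ : Sˣ) : S) * m := by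
      rw [mul_inv_rev, j.map_mul, Units.val_mul, mul_assoc, ← mul_assoc ((j τ⁻¹ : Sˣ) : S),
        hjj' τ, one_mul]
    rw [h1, j.map_mul, Units.val_mul, mul_assoc]
  have hp_smul : ∀ (s m : S), p (s * m) = s * p m := by
    intro s m
    obtain ⟨f, hf, -⟩ := free s
    set P : S →+ S := AddMonoidHom.mk' p hp_add with hP_def
    have hP : ∀ x : S, P x = p x := fun x => rfl
    calc p (s * m) = P (∑ σ : G, ((j σ : S) * ι (f σ)) * m) := by
          rw [hf, Finset.sum_mul, hP]
      _ = ∑ σ : G, p (((j σ : S) * ι (f σ)) * m) := by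
          rw [map_sum]; simp only [hP]
      _ = ∑ σ : G, ((j σ : S) * ι (f σ)) * p m := by
          refine Finset.sum_congr rfl fun σ _ => ?_
          rw [mul_assoc, hp_j, hp_iota, mul_assoc]
      _ = s * p m := by rw [← Finset.sum_mul, ← hf]
  let P : S →ₗ[S] N :=
    { toFun := fun m => ⟨p m, hp_mem m⟩
      map_add' := fun m m' => Subtype.ext (hp_add m m')
      map_smul' := fun s m => Subtype.ext (hp_smul s m) }
  exact ⟨LinearMap.ker P, LinearMap.isCompl_of_proj fun x : N => Subtype.ext (hp_id x x.2)⟩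
end
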